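/- Let q be an odd prime power, ψ a nontrivial multiplicative character of F_q, and χ a generator of the character group of F_q^×. Then Σ_{r=0}^{q-2} 1/J(ψ, χ^r) = ((1-q)/q)·(1 + ψ(-1)). -/

import Mathlib

open Finset

section Aux

variable {F : Type*} [Field F] [Fintype F] [DecidableEq F]

/-- Sum over all characters of `η a` vanishes for `a ≠ 1`. -/
lemma aux_sum_chars [Fintype (MulChar F ℂ)] {a : F} (ha : a ≠ 1) :
    ∑ η : MulChar F ℂ, η a = 0 := by
  by_cases hu : IsUnit a
  · letI : NeZero (Monoid.exponent Fˣ) := ⟨Monoid.exponent_ne_zero_of_finite⟩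
    obtain ⟨χ₀, hχ₀⟩ := MulChar.exists_apply_ne_one_of_hasEnoughRootsOfUnity F ℂ ha
    have key : χ₀ a * ∑ η : MulChar F ℂ, η a = ∑ η : MulChar F ℂ, η a := by
      rw [Finset.mul_sum]
      refine Fintype.sum_bijective (χ₀ * ·) (Group.mulLeft_bijective χ₀) _ _ fun η ↦ ?_
      simp [MulChar.mul_apply]
    have h0 : (χ₀ a - 1) * ∑ η : MulChar F ℂ, η a = 0 := by
      rw [sub_mul, one_mul, key, sub_self]
    rcases mul_eq_zero.mp h0 with h | h
    · exact absurd (sub_eq_zero.mp h) hχ₀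
    · exact h
  · simp [MulChar.map_nonunit _ hu]

/-- Sum of Jacobi sums over all second characters vanishes. -/
lemma aux_sum_jacobi [Fintype (MulChar F ℂ)] (χ' : MulChar F ℂ) :
    ∑ η : MulChar F ℂ, jacobiSum χ' η = 0 := by
  simp only [jacobiSum]
  rw [Finset.sum_comm]
  refine Finset.sum_eq_zero fun x _ ↦ ?_
  by_cases hx : x = 0
  · refine Finset.sum_eq_zero fun η _ ↦ ?_
    rw [hx, MulChar.map_nonunit χ' (by simp), zero_mul]
  · rw [← Finset.mul_sum, aux_sum_chars (fun h ↦ hx (by linear_combination -h)), mul_zero]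

end Aux

theorem sum_inv_jacobiSum (F : Type*) [Field F] [Fintype F] [DecidableEq F]
    (hodd : Odd (Fintype.card F))
    (ψ χ : MulChar F ℂ) (hψ : ψ ≠ 1) (hχ : ∀ ψ' : MulChar F ℂ, ∃ r : ℕ, ψ' = χ ^ r) :
    ∑ r ∈ Finset.range (Fintype.card F - 1), (jacobiSum ψ (χ ^ r))⁻¹
      = ((1 - (Fintype.card F : ℂ)) / (Fintype.card F : ℂ)) * (1 + ψ (-1)) := by
  classical
  letI : Fintype (MulChar F ℂ) := Fintype.ofFinite _
  letI : NeZero (Monoid.exponent Fˣ) := ⟨Monoid.exponent_ne_zero_of_finite⟩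
  set q := Fintype.card F with hq
  have hq2 : 2 ≤ q := Fintype.one_lt_card
  have hq1pos : 0 < q - 1 := by omega
  have hq0 : (q : ℂ) ≠ 0 := Nat.cast_ne_zero.mpr (by omega)
  -- order of χ
  have hcard : Nat.card (MulChar F ℂ) = q - 1 := by
    rw [MulChar.card_eq_card_units_of_hasEnoughRootsOfUnity, Nat.card_eq_fintype_card,
      Fintype.card_units]
  have horder : orderOf χ = q - 1 := by
    rw [orderOf_eq_card_of_forall_mem_zpowers fun η ↦ ?_, hcard]
    obtain ⟨r, hr⟩ := hχ η
    exact hr ▸ pow_mem (Subgroup.mem_zpowers χ) r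
  -- reindex sum over characters
  have hre : ∀ f : MulChar F ℂ → ℂ,
      ∑ r ∈ Finset.range (q - 1), f (χ ^ r) = ∑ η : MulChar F ℂ, f η := by
    intro f
    refine Finset.sum_bij (fun r _ ↦ χ ^ r) (fun r _ ↦ Finset.mem_univ _)
      (fun a ha b hb h ↦ ?_) (fun η _ ↦ ?_) (fun a ha ↦ rfl)
    · exact pow_injOn_Iio_orderOf (by simpa [horder] using Finset.mem_range.mp ha)
        (by simpa [horder] using Finset.mem_range.mp hb) h
    · obtain ⟨r, hr⟩ := hχ η
      exact ⟨r % (q - 1), Finset.mem_range.mpr (Nat.mod_lt _ hq1pos),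
        show χ ^ (r % (q - 1)) = η by rw [← horder, pow_mod_orderOf, hr]⟩
  rw [show (∑ r ∈ Finset.range (q - 1), (jacobiSum ψ (χ ^ r))⁻¹)
      = ∑ η : MulChar F ℂ, (jacobiSum ψ η)⁻¹ from hre fun η ↦ (jacobiSum ψ η)⁻¹]
  -- basic facts
  have hψinv : ψ⁻¹ ≠ 1 := inv_ne_one.mpr hψ
  have hsq : ψ (-1) * ψ (-1) = 1 := by
    rw [← map_mul, neg_mul_neg, one_mul, map_one]
  have hψinv1 : ψ⁻¹ (-1) = ψ (-1) := by
    rw [MulChar.inv_apply', inv_neg_one]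
  have hJ1 : jacobiSum ψ (1 : MulChar F ℂ) = -1 := by
    rw [jacobiSum_comm, jacobiSum_one_nontrivial hψ]
  have hJinv : jacobiSum ψ ψ⁻¹ = -ψ (-1) := jacobiSum_nontrivial_inv hψ
  have hring : ringChar ℂ ≠ ringChar F := by
    rw [ringChar.eq_zero]
    exact (CharP.ringChar_ne_zero_of_finite F).symm
  -- split off the two special characters
  set T : Finset (MulChar F ℂ) :=
    (Finset.univ.erase (1 : MulChar F ℂ)).erase ψ⁻¹ with hT
  have hmem1 : ψ⁻¹ ∈ Finset.univ.erase (1 : MulChar F ℂ) :=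
    Finset.mem_erase.mpr ⟨hψinv, Finset.mem_univ _⟩
  have hsplit : ∑ η : MulChar F ℂ, (jacobiSum ψ η)⁻¹
      = (∑ η ∈ T, (jacobiSum ψ η)⁻¹) + (jacobiSum ψ ψ⁻¹)⁻¹ + (jacobiSum ψ 1)⁻¹ := by
    rw [Finset.sum_erase_add _ _ hmem1, Finset.sum_erase_add _ _ (Finset.mem_univ _)]
  -- the generic terms
  have hgen : ∀ η ∈ T, (jacobiSum ψ η)⁻¹ = jacobiSum ψ⁻¹ η⁻¹ * (q : ℂ)⁻¹ := by
    intro η hη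
    rw [hT, Finset.mem_erase, Finset.mem_erase] at hη
    have hη1 : η ≠ 1 := hη.2.1
    have hmul : ψ * η ≠ 1 := fun h ↦ hη.1 (eq_inv_of_mul_eq_one_left (mul_comm ψ η ▸ h))
    have h := jacobiSum_mul_jacobiSum_inv hring hψ hη1 hmul
    refine inv_eq_of_mul_eq_one_right ?_
    rw [← mul_assoc, h, mul_inv_cancel₀ hq0]
  rw [hsplit, Finset.sum_congr rfl hgen, ← Finset.sum_mul]
  -- reindex by inversion
  have hinvsum : ∑ η ∈ T, jacobiSum ψ⁻¹ η⁻¹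
      = ∑ η ∈ (Finset.univ.erase (1 : MulChar F ℂ)).erase ψ, jacobiSum ψ⁻¹ η := by
    refine Finset.sum_bij' (fun η _ ↦ η⁻¹) (fun η _ ↦ η⁻¹) ?_ ?_ ?_ ?_ ?_
    · intro η hη
      simp only [hT, Finset.mem_erase, Finset.mem_univ, and_true] at hη ⊢
      exact ⟨fun h ↦ hη.1 (by rw [← h, inv_inv]), inv_ne_one.mpr hη.2⟩
    · intro η hη
      simp only [hT, Finset.mem_erase, Finset.mem_univ, and_true] at hη ⊢
      exact ⟨fun h ↦ hη.1 (inv_injective h), inv_ne_one.mpr hη.2⟩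
    · intro η _; exact inv_inv η
    · intro η _; exact inv_inv η
    · intro η _; rfl
  have hmemψ : ψ ∈ Finset.univ.erase (1 : MulChar F ℂ) :=
    Finset.mem_erase.mpr ⟨hψ, Finset.mem_univ _⟩
  have hJinv2 : jacobiSum ψ⁻¹ ψ = -ψ (-1) := by
    have := jacobiSum_nontrivial_inv hψinv
    rwa [inv_inv, hψinv1] at this
  have hJinv3 : jacobiSum ψ⁻¹ (1 : MulChar F ℂ) = -1 := by
    rw [jacobiSum_comm, jacobiSum_one_nontrivial hψinv]
  have hsum2 : ∑ η ∈ (Finset.univ.erase (1 : MulChar F ℂ)).erase ψ, jacobiSum ψ⁻¹ η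
      = 1 + ψ (-1) := by
    have h := aux_sum_jacobi (F := F) ψ⁻¹
    rw [← Finset.sum_erase_add _ _ (Finset.mem_univ (1 : MulChar F ℂ)),
      ← Finset.sum_erase_add _ _ hmemψ, hJinv2, hJinv3] at h
    linear_combination h
  rw [hinvsum, hsum2, hJ1, hJinv]
  have hinvneg : (-ψ (-1))⁻¹ = -ψ (-1) :=
    inv_eq_of_mul_eq_one_right (by linear_combination hsq)
  rw [hinvneg]
  field_simp
  ring
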